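/- Let K ⊆ ℝⁿ be an open convex cone, ϑ > 0, and let F : ℝⁿ → ℝ be convex and differentiable on K with F(t • x) = F(x) − ϑ * log t for all x ∈ K and all t > 0. Let x ∈ K, let s ∈ ℝⁿ, and suppose x̃ ∈ K satisfies ∇F(x̃) = −s (so x̃ is a maximizer of z ↦ −⟨s, z⟩ − F(z) on K). Set s̃ := −∇F(x), μ := ⟨s, x⟩ / ϑ, and μ̃ := ⟨s̃, x̃⟩ / ϑ. Then μ > 0, μ̃ > 0, and μ · μ̃ ≥ 1. Moreover, if F is strictly convex on K, then equality μ · μ̃ = 1 holds if and only if x = μ • x̃. -/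

import Mathlib

open scoped RealInnerProductSpace
open Set Filter Topology
set_option maxHeartbeats 1000000

section helpers
variable {n : ℕ}

lemma fderiv_apply_eq_inner (F : EuclideanSpace ℝ (Fin n) → ℝ)
    (a v : EuclideanSpace ℝ (Fin n)) (h : DifferentiableAt ℝ F a) :
    fderiv ℝ F a v = ⟪gradient F a, v⟫ := by
  rw [gradient, InnerProductSpace.toDual_symm_apply]

/-- Gradient inequality for a convex function on an open convex set. -/
lemma grad_ineq {K : Set (EuclideanSpace ℝ (Fin n))} (hK : IsOpen K)
    {F : EuclideanSpace ℝ (Fin n) → ℝ} (hFconv : ConvexOn ℝ K F)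
    (hFdiff : DifferentiableOn ℝ F K)
    {a y : EuclideanSpace ℝ (Fin n)} (ha : a ∈ K) (hy : y ∈ K) :
    ⟪gradient F a, y - a⟫ ≤ F y - F a := by
  have hd : DifferentiableAt ℝ F a := hFdiff.differentiableAt (hK.mem_nhds ha)
  set g : ℝ → ℝ := fun t => F (a + t • (y - a)) with hg
  have hc : HasDerivAt (fun t : ℝ => a + t • (y - a)) (y - a) 0 := by
    simpa using ((hasDerivAt_id (0:ℝ)).smul_const (y - a)).const_add a
  have h1 : HasDerivAt g (fderiv ℝ F a (y - a)) 0 := by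
    have hd' : HasFDerivAt F (fderiv ℝ F a) (a + (0:ℝ) • (y - a)) := by
      simpa using hd.hasFDerivAt
    exact hd'.comp_hasDerivAt 0 hc
  have hslope : Tendsto (slope g 0) (𝓝[>] (0:ℝ)) (𝓝 (fderiv ℝ F a (y - a))) :=
    (hasDerivAt_iff_tendsto_slope.1 h1).mono_left
      (nhdsWithin_mono _ (fun t ht => by simpa using (ne_of_gt ht)))
  have hev : ∀ᶠ t in 𝓝[>] (0:ℝ), slope g 0 t ≤ F y - F a := by
    filter_upwards [Ioo_mem_nhdsGT_of_mem (Set.left_mem_Ico.2 one_pos)] with t ht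
    have ht0 : 0 < t := ht.1
    have key : F (a + t • (y - a)) ≤ (1 - t) * F a + t * F y := by
      have h2 := hFconv.2 ha hy (sub_nonneg.2 ht.2.le) ht0.le (by ring)
      have : (1 - t) • a + t • y = a + t • (y - a) := by
        simp [smul_sub, sub_smul]; abel
      rwa [this] at h2
    have : g t - g 0 ≤ t * (F y - F a) := by
      simp only [hg]
      simp only [zero_smul, add_zero]
      nlinarith [key]
    rw [slope_def_field]
    simp only [sub_zero]
    rw [div_le_iff₀ ht0] at *
    · simpa [div_eq_inv_mul, mul_comm] using this
  have := le_of_tendsto hslope hev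
  rwa [fderiv_apply_eq_inner F a _ hd] at this

lemma grad_ineq_strict {K : Set (EuclideanSpace ℝ (Fin n))} (hK : IsOpen K)
    {F : EuclideanSpace ℝ (Fin n) → ℝ} (hFconv : StrictConvexOn ℝ K F)
    (hFdiff : DifferentiableOn ℝ F K)
    {a y : EuclideanSpace ℝ (Fin n)} (ha : a ∈ K) (hy : y ∈ K) (hne : y ≠ a) :
    ⟪gradient F a, y - a⟫ < F y - F a := by
  set m : EuclideanSpace ℝ (Fin n) := (1/2 : ℝ) • a + (1/2 : ℝ) • y with hm
  have hmK : m ∈ K := hFconv.1 ha hy (by norm_num) (by norm_num) (by norm_num)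
  have hFm : F m < (1/2) * F a + (1/2) * F y :=
    hFconv.2 ha hy (Ne.symm hne) (by norm_num) (by norm_num) (by norm_num)
  have h1 : ⟪gradient F a, m - a⟫ ≤ F m - F a :=
    grad_ineq hK hFconv.convexOn hFdiff ha hmK
  have hma : m - a = (1/2 : ℝ) • (y - a) := by
    simp [hm, smul_sub, sub_smul]; module
  rw [hma, real_inner_smul_right] at h1
  linarith

/-- Euler identity for logarithmically homogeneous functions. -/
lemma euler {K : Set (EuclideanSpace ℝ (Fin n))} (hK : IsOpen K)
    {F : EuclideanSpace ℝ (Fin n) → ℝ} (hFdiff : DifferentiableOn ℝ F K)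
    {ϑ : ℝ} (hhom : ∀ x ∈ K, ∀ t : ℝ, 0 < t → F (t • x) = F x - ϑ * Real.log t)
    {a : EuclideanSpace ℝ (Fin n)} (ha : a ∈ K) :
    ⟪gradient F a, a⟫ = -ϑ := by
  have hd : DifferentiableAt ℝ F a := hFdiff.differentiableAt (hK.mem_nhds ha)
  have hc : HasDerivAt (fun t : ℝ => t • a) a 1 := by
    simpa using (hasDerivAt_id (1:ℝ)).smul_const a
  have h1 : HasDerivAt (fun t : ℝ => F (t • a)) (fderiv ℝ F a a) 1 := by
    have hd' : HasFDerivAt F (fderiv ℝ F a) ((1:ℝ) • a) := by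
      simpa using hd.hasFDerivAt
    exact hd'.comp_hasDerivAt 1 hc
  have h2 : HasDerivAt (fun t : ℝ => F a - ϑ * Real.log t) (-ϑ) 1 := by
    have := ((Real.hasDerivAt_log one_ne_zero).const_mul ϑ).const_sub (F a)
    simpa using this
  have heq : (fun t : ℝ => F (t • a)) =ᶠ[𝓝 (1:ℝ)] (fun t => F a - ϑ * Real.log t) := by
    filter_upwards [Ioi_mem_nhds (by norm_num : (0:ℝ) < 1)] with t ht
    exact hhom a ha t ht
  have h1' : HasDerivAt (fun t : ℝ => F a - ϑ * Real.log t) (fderiv ℝ F a a) 1 :=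
    h1.congr_of_eventuallyEq heq.symm
  have := h1'.unique h2
  rw [← fderiv_apply_eq_inner F a a hd, this]

end helpers

/-- Nesterov–Todd lemma: `μ μ̃ ≥ 1`, with equality iff `x = μ • x̃` (for strictly
convex `F`). -/
theorem stmt_4 (n : ℕ) (K : Set (EuclideanSpace ℝ (Fin n)))
    (hK : IsOpen K) (hKconv : Convex ℝ K)
    (hcone : ∀ x ∈ K, ∀ t : ℝ, 0 < t → t • x ∈ K)
    (ϑ : ℝ) (hϑ : 0 < ϑ) (F : EuclideanSpace ℝ (Fin n) → ℝ)
    (hFconv : ConvexOn ℝ K F) (hFdiff : DifferentiableOn ℝ F K)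
    (hhom : ∀ x ∈ K, ∀ t : ℝ, 0 < t → F (t • x) = F x - ϑ * Real.log t)
    (x : EuclideanSpace ℝ (Fin n)) (hx : x ∈ K)
    (s : EuclideanSpace ℝ (Fin n))
    (xt : EuclideanSpace ℝ (Fin n)) (hxt : xt ∈ K)
    (hgrad : gradient F xt = -s)
    (st : EuclideanSpace ℝ (Fin n)) (hst : st = -gradient F x)
    (μ μt : ℝ) (hμ : μ = ⟪s, x⟫ / ϑ) (hμt : μt = ⟪st, xt⟫ / ϑ) :
    0 < μ ∧ 0 < μt ∧ 1 ≤ μ * μt ∧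
      (StrictConvexOn ℝ K F → (μ * μt = 1 ↔ x = μ • xt)) := by
  -- Euler identities
  have eulx : ⟪gradient F x, x⟫ = -ϑ := euler hK hFdiff hhom hx
  have eulxt : ⟪gradient F xt, xt⟫ = -ϑ := euler hK hFdiff hhom hxt
  have hstx : ⟪st, x⟫ = ϑ := by
    rw [hst, inner_neg_left, eulx]; ring
  have hsxt : ⟪s, xt⟫ = ϑ := by
    have : ⟪-s, xt⟫ = -ϑ := by rw [← hgrad]; exact eulxt
    rw [inner_neg_left] at this; linarith
  have hsx : ⟪s, x⟫ = ϑ * μ := by rw [hμ]; field_simp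
  have hstxt : ⟪st, xt⟫ = ϑ * μt := by rw [hμt]; field_simp
  -- key inequality A t
  have A : ∀ t : ℝ, 0 < t → -(t * (ϑ * μ)) + ϑ ≤ F x - ϑ * Real.log t - F xt := by
    intro t ht
    have h := grad_ineq hK hFconv hFdiff hxt (hcone x hx t ht)
    rw [hgrad, inner_neg_left, inner_sub_right, real_inner_smul_right, hsx, hsxt,
      hhom x hx t ht] at h
    linarith
  have B : ∀ t : ℝ, 0 < t → -(t * (ϑ * μt)) + ϑ ≤ F xt - ϑ * Real.log t - F x := by
    intro t ht
    have h := grad_ineq hK hFconv hFdiff hx (hcone xt hxt t ht)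
    rw [hst] at hstx hstxt
    rw [inner_sub_right, real_inner_smul_right, hhom xt hxt t ht] at h
    have e1 : ⟪gradient F x, xt⟫ = -(ϑ * μt) := by
      rw [inner_neg_left] at hstxt; linarith
    have e2 : ⟪gradient F x, x⟫ = -ϑ := eulx
    rw [e1, e2] at h
    linarith
  -- positivity of μ
  have hμpos : 0 < μ := by
    by_contra hc
    push_neg at hc
    set t₀ := Real.exp ((F x - F xt - ϑ)/ϑ + 1) with ht₀
    have ht₀pos : 0 < t₀ := Real.exp_pos _
    have h := A t₀ ht₀pos
    rw [ht₀, Real.log_exp] at h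
    have hfe : ϑ * ((F x - F xt - ϑ)/ϑ + 1) = F x - F xt := by
      field_simp
      ring
    nlinarith [mul_nonneg (mul_nonneg ht₀pos.le hϑ.le) (neg_nonneg.2 hc)]
  have hμtpos : 0 < μt := by
    by_contra hc
    push_neg at hc
    set t₀ := Real.exp ((F xt - F x - ϑ)/ϑ + 1) with ht₀
    have ht₀pos : 0 < t₀ := Real.exp_pos _
    have h := B t₀ ht₀pos
    rw [ht₀, Real.log_exp] at h
    have hfe : ϑ * ((F xt - F x - ϑ)/ϑ + 1) = F xt - F x := by
      field_simp
      ring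
    nlinarith [mul_nonneg (mul_nonneg ht₀pos.le hϑ.le) (neg_nonneg.2 hc)]
  -- the two key scalar inequalities
  have he : μ⁻¹ * (ϑ * μ) = ϑ := by field_simp
  have het : μt⁻¹ * (ϑ * μt) = ϑ := by field_simp
  have hA : 0 ≤ F x - F xt + ϑ * Real.log μ := by
    have h := A μ⁻¹ (inv_pos.2 hμpos)
    rw [Real.log_inv] at h
    nlinarith [h, he]
  have hB : 0 ≤ F xt - F x + ϑ * Real.log μt := by
    have h := B μt⁻¹ (inv_pos.2 hμtpos)
    rw [Real.log_inv] at h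
    nlinarith [h, het]
  have h1le : (1:ℝ) ≤ μ * μt := by
    have hlog : 0 ≤ Real.log μ + Real.log μt := by nlinarith [hA, hB]
    calc (1:ℝ) = Real.exp 0 := Real.exp_zero.symm
      _ ≤ Real.exp (Real.log μ + Real.log μt) := Real.exp_le_exp.2 hlog
      _ = μ * μt := by
          rw [← Real.log_mul hμpos.ne' hμtpos.ne', Real.exp_log (mul_pos hμpos hμtpos)]
  refine ⟨hμpos, hμtpos, h1le, fun hS => ⟨fun heq => ?_, fun heq => ?_⟩⟩
  · -- equality implies x = μ • xt
    by_contra hne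
    have hyK : μ⁻¹ • x ∈ K := hcone x hx _ (inv_pos.2 hμpos)
    have hne' : μ⁻¹ • x ≠ xt := by
      intro hcontr
      apply hne
      rw [← hcontr, smul_smul]
      rw [mul_inv_cancel₀ hμpos.ne', one_smul]
    have hstrict := grad_ineq_strict hK hS hFdiff hxt hyK hne'
    rw [hgrad, inner_neg_left, inner_sub_right, real_inner_smul_right, hsx, hsxt,
      hhom x hx _ (inv_pos.2 hμpos), Real.log_inv] at hstrict
    have hlogsum : Real.log μ + Real.log μt = 0 := by
      rw [← Real.log_mul hμpos.ne' hμtpos.ne', heq, Real.log_one]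
    nlinarith [hstrict, hB, he, hϑ, hlogsum]
  · -- x = μ • xt implies equality
    have h1 := eulx
    rw [heq, real_inner_smul_right] at h1
    have h2 : ⟪st, xt⟫ = -⟪gradient F (μ • xt), xt⟫ := by
      rw [hst, heq, inner_neg_left]
    rw [hstxt] at h2
    have hAeq : ⟪gradient F (μ • xt), xt⟫ = -(ϑ * μt) := by linarith
    rw [hAeq] at h1
    have h3 : (μ * μt) * ϑ = 1 * ϑ := by linear_combination -h1
    exact mul_right_cancel₀ hϑ.ne' h3
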